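/- Let Z be a real normed space and let D, E, D_k, E_k ⊆ Z (k ∈ ℕ). Write cl(D) for the norm closure of D. Assume: (i) (data closure) a pair (y, z) ∈ Z × Z is the data limit of some sequence in D × E if and only if y ∈ cl(D) and z ∈ E; (ii) (fine approximation) for each ξ ∈ D there is a sequence ξ_k ∈ D_k with ‖ξ_k − ξ‖_Z → 0, and for each ζ ∈ E there is a sequence ζ_k ∈ E_k with ‖ζ_k − ζ‖_Z → 0; (iii) (uniform approximation) there are sequences of positive reals t_k → 0 and r_k → 0 such that inf_{η∈D} ‖η − ξ‖_Z ≤ t_k for every ξ ∈ D_k and inf_{η∈E} ‖η − ζ‖_Z ≤ r_k for every ζ ∈ E_k. Then cl(D) × E = Δ-lim_{k→∞} (D_k × E_k), i.e., both (DC1) and (DC2) hold with limit set cl(D) × E. -/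

import Mathlib

open Filter Topology

/-- Weak convergence of a sequence in a normed space: `f (y k) → f a` for every
continuous linear functional `f`. -/
def WeakConvergesTo {Z : Type*} [NormedAddCommGroup Z] [NormedSpace ℝ Z]
    (y : ℕ → Z) (a : Z) : Prop :=
  ∀ f : StrongDual ℝ Z, Tendsto (fun k => f (y k)) atTop (𝓝 (f a))

/-- Data convergence: `y_k ⇀ a`, `z_k ⇀ b`, and `y_k - z_k → a - b` strongly. -/
def DataConvergesTo {Z : Type*} [NormedAddCommGroup Z] [NormedSpace ℝ Z]
    (y z : ℕ → Z) (a b : Z) : Prop :=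
  WeakConvergesTo y a ∧ WeakConvergesTo z b ∧
    Tendsto (fun k => ‖(y k - z k) - (a - b)‖) atTop (𝓝 0)

/-- (DC1): every point of `D × E` is a data limit of a sequence of points of `D_k × E_k`. -/
def DC1 {Z : Type*} [NormedAddCommGroup Z] [NormedSpace ℝ Z]
    (D E : Set Z) (Dk Ek : ℕ → Set Z) : Prop :=
  ∀ a ∈ D, ∀ b ∈ E, ∃ y z : ℕ → Z,
    (∀ k, y k ∈ Dk k ∧ z k ∈ Ek k) ∧ DataConvergesTo y z a b

/-- (DC2): data limits of subsequences of points of `D_k × E_k` belong to `D × E`. -/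
def DC2 {Z : Type*} [NormedAddCommGroup Z] [NormedSpace ℝ Z]
    (D E : Set Z) (Dk Ek : ℕ → Set Z) : Prop :=
  ∀ kj : ℕ → ℕ, StrictMono kj → ∀ (y z : ℕ → Z) (a b : Z),
    (∀ j, y j ∈ Dk (kj j) ∧ z j ∈ Ek (kj j)) →
    DataConvergesTo y z a b → a ∈ D ∧ b ∈ E

lemma weak_perturb {Z : Type*} [NormedAddCommGroup Z] [NormedSpace ℝ Z]
    {y yh : ℕ → Z} {a : Z} (hy : WeakConvergesTo y a)
    (h : Tendsto (fun k => ‖yh k - y k‖) atTop (𝓝 0)) : WeakConvergesTo yh a := by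
  intro f
  have h1 : Tendsto (fun k => f (yh k) - f (y k)) atTop (𝓝 0) := by
    refine squeeze_zero_norm (fun k => ?_) (by simpa using h.const_mul ‖f‖)
    calc ‖f (yh k) - f (y k)‖ = ‖f (yh k - y k)‖ := by rw [map_sub]
      _ ≤ ‖f‖ * ‖yh k - y k‖ := f.le_opNorm _
  have h2 := h1.add (hy f)
  simpa using h2

lemma weak_of_strong {Z : Type*} [NormedAddCommGroup Z] [NormedSpace ℝ Z]
    {y : ℕ → Z} {a : Z} (h : Tendsto (fun k => ‖y k - a‖) atTop (𝓝 0)) :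
    WeakConvergesTo y a := by
  have htriv : WeakConvergesTo (fun _ => a) a := fun f => tendsto_const_nhds
  exact weak_perturb htriv (by simpa using h)

/-- If (i) a pair `(y, z)` is the data limit of a sequence in `D × E` iff
`y ∈ cl(D)` and `z ∈ E` (data closure), (ii) `D_k` finely approximates `D` and `E_k`
finely approximates `E`, and (iii) `D_k` is uniformly approximated by `D` within
`t_k → 0` and `E_k` by `E` within `r_k → 0`, then
`cl(D) × E = Δ-lim (D_k × E_k)`, i.e. (DC1) and (DC2) hold with limit set `cl(D) × E`. -/
theorem statement5 {Z : Type*} [NormedAddCommGroup Z] [NormedSpace ℝ Z]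
    (D E : Set Z) (Dk Ek : ℕ → Set Z)
    (hclos : ∀ y z : Z,
      (∃ yh zh : ℕ → Z, (∀ n, yh n ∈ D ∧ zh n ∈ E) ∧ DataConvergesTo yh zh y z) ↔
        (y ∈ closure D ∧ z ∈ E))
    (hfineD : ∀ ξ ∈ D, ∃ ξk : ℕ → Z, (∀ k, ξk k ∈ Dk k) ∧
        Tendsto (fun k => ‖ξk k - ξ‖) atTop (𝓝 0))
    (hfineE : ∀ ζ ∈ E, ∃ ζk : ℕ → Z, (∀ k, ζk k ∈ Ek k) ∧
        Tendsto (fun k => ‖ζk k - ζ‖) atTop (𝓝 0))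
    (t r : ℕ → ℝ) (htpos : ∀ k, 0 < t k) (hrpos : ∀ k, 0 < r k)
    (ht : Tendsto t atTop (𝓝 0)) (hr : Tendsto r atTop (𝓝 0))
    (hunifD : ∀ k, ∀ ξ ∈ Dk k, ∀ ε > (0 : ℝ), ∃ η ∈ D, ‖η - ξ‖ ≤ t k + ε)
    (hunifE : ∀ k, ∀ ζ ∈ Ek k, ∀ ε > (0 : ℝ), ∃ η ∈ E, ‖η - ζ‖ ≤ r k + ε) :
    DC1 (closure D) E Dk Ek ∧ DC2 (closure D) E Dk Ek := by
  constructor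
  · -- DC1
    intro a ha b hb
    obtain ⟨d0, hd0⟩ : D.Nonempty := by
      rcases Metric.mem_closure_iff.mp ha 1 one_pos with ⟨d, hd, _⟩
      exact ⟨d, hd⟩
    obtain ⟨ξ0, hξ0mem, _⟩ := hfineD d0 hd0
    have hDkne : ∀ k, (Dk k).Nonempty := fun k => ⟨ξ0 k, hξ0mem k⟩
    -- infDist a (Dk k) → 0
    have hinfD : Tendsto (fun k => Metric.infDist a (Dk k)) atTop (𝓝 0) := by
      rw [Metric.tendsto_atTop]
      intro ε hε
      rcases Metric.mem_closure_iff.mp ha (ε / 2) (by linarith) with ⟨d, hdD, hdd⟩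
      obtain ⟨ξk, hξkmem, hξktend⟩ := hfineD d hdD
      rcases (Metric.tendsto_atTop.mp hξktend) (ε / 2) (by linarith) with ⟨N, hN⟩
      refine ⟨N, fun k hk => ?_⟩
      have h1 : ‖ξk k - d‖ < ε / 2 := by
        have := hN k hk
        rw [Real.dist_eq, sub_zero] at this
        calc ‖ξk k - d‖ ≤ |‖ξk k - d‖| := le_abs_self _
          _ < ε / 2 := this
      have h2 : Metric.infDist a (Dk k) ≤ dist a (ξk k) :=
        Metric.infDist_le_dist_of_mem (hξkmem k)
      have h3 : dist a (ξk k) ≤ dist a d + dist d (ξk k) := dist_triangle _ _ _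
      have h4 : dist d (ξk k) = ‖ξk k - d‖ := by rw [dist_eq_norm, norm_sub_rev]
      rw [Real.dist_eq, sub_zero, abs_of_nonneg Metric.infDist_nonneg]
      linarith
    -- choose y k ∈ Dk k close to infDist
    have hchoice : ∀ k : ℕ, ∃ p ∈ Dk k,
        dist a p < Metric.infDist a (Dk k) + 1 / (k + 1) := by
      intro k
      have hlt : Metric.infDist a (Dk k) < Metric.infDist a (Dk k) + 1 / (k + 1 : ℝ) := by
        have : (0 : ℝ) < 1 / (k + 1 : ℝ) := by positivity
        linarith
      exact (Metric.infDist_lt_iff (hDkne k)).mp hlt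
    choose y hymem hydist using hchoice
    have hybnd : Tendsto (fun k => Metric.infDist a (Dk k) + 1 / (k + 1 : ℝ)) atTop (𝓝 0) := by
      simpa using hinfD.add tendsto_one_div_add_atTop_nhds_zero_nat
    have hystrong : Tendsto (fun k => ‖y k - a‖) atTop (𝓝 0) := by
      apply squeeze_zero (fun k => norm_nonneg _) (fun k => ?_) hybnd
      have : ‖y k - a‖ = dist a (y k) := by rw [dist_eq_norm, norm_sub_rev]
      rw [this]
      exact (hydist k).le
    obtain ⟨z, hzmem, hzstrong⟩ := hfineE b hb
    refine ⟨y, z, fun k => ⟨hymem k, hzmem k⟩, weak_of_strong hystrong,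
      weak_of_strong hzstrong, ?_⟩
    apply squeeze_zero (fun k => norm_nonneg _) (fun k => ?_)
      (show Tendsto (fun k => ‖y k - a‖ + ‖z k - b‖) atTop (𝓝 0) by
        simpa using hystrong.add hzstrong)
    calc ‖(y k - z k) - (a - b)‖ = ‖(y k - a) - (z k - b)‖ := by congr 1; abel
      _ ≤ ‖y k - a‖ + ‖z k - b‖ := norm_sub_le _ _
  · -- DC2
    intro kj hkj y z a b hmem hdc
    have hkjtop : Tendsto kj atTop atTop := hkj.tendsto_atTop
    have hYD : ∀ j : ℕ, ∃ η ∈ D, ‖η - y j‖ ≤ t (kj j) + 1 / (j + 1) := fun j =>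
      hunifD (kj j) (y j) (hmem j).1 (1 / (j + 1)) (by positivity)
    have hZE : ∀ j : ℕ, ∃ η ∈ E, ‖η - z j‖ ≤ r (kj j) + 1 / (j + 1) := fun j =>
      hunifE (kj j) (z j) (hmem j).2 (1 / (j + 1)) (by positivity)
    choose yh hyhD hyhle using hYD
    choose zh hzhE hzhle using hZE
    have hbt : Tendsto (fun j => t (kj j) + 1 / (j + 1 : ℝ)) atTop (𝓝 0) := by
      simpa using (ht.comp hkjtop).add tendsto_one_div_add_atTop_nhds_zero_nat
    have hbr : Tendsto (fun j => r (kj j) + 1 / (j + 1 : ℝ)) atTop (𝓝 0) := by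
      simpa using (hr.comp hkjtop).add tendsto_one_div_add_atTop_nhds_zero_nat
    have hyd : Tendsto (fun j => ‖yh j - y j‖) atTop (𝓝 0) :=
      squeeze_zero (fun j => norm_nonneg _) hyhle hbt
    have hzd : Tendsto (fun j => ‖zh j - z j‖) atTop (𝓝 0) :=
      squeeze_zero (fun j => norm_nonneg _) hzhle hbr
    obtain ⟨hwy, hwz, hstr⟩ := hdc
    have hdc' : DataConvergesTo yh zh a b := by
      refine ⟨weak_perturb hwy hyd, weak_perturb hwz hzd, ?_⟩
      apply squeeze_zero (fun j => norm_nonneg _) (fun j => ?_)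
        (show Tendsto (fun j => ‖yh j - y j‖ + ‖zh j - z j‖ + ‖(y j - z j) - (a - b)‖)
            atTop (𝓝 0) by simpa using (hyd.add hzd).add hstr)
      calc ‖(yh j - zh j) - (a - b)‖
          = ‖((yh j - y j) - (zh j - z j)) + ((y j - z j) - (a - b))‖ := by congr 1; abel
        _ ≤ ‖(yh j - y j) - (zh j - z j)‖ + ‖(y j - z j) - (a - b)‖ := norm_add_le _ _
        _ ≤ (‖yh j - y j‖ + ‖zh j - z j‖) + ‖(y j - z j) - (a - b)‖ := by
            have := norm_sub_le (yh j - y j) (zh j - z j)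
            linarith
    exact (hclos a b).mp ⟨yh, zh, fun j => ⟨hyhD j, hzhE j⟩, hdc'⟩
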